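/- Suppose φ₀ : (Fin n → ℝ) → ℝ is differentiable and satisfies the steady-state HJB equation with state cost m₀, i.e. for all x: ∇φ₀(x) ⬝ᵥ f(x) − (1/4)·((g x)ᵀ.mulVec (∇φ₀ x)) ⬝ᵥ (R⁻¹.mulVec ((g x)ᵀ.mulVec (∇φ₀ x))) + m₀(x) = 0, and suppose h : (Fin n → ℝ) → ℝ is differentiable and satisfies, for all x, the linear PDE ∇h(x) ⬝ᵥ (f(x) − (1/2)·(g x).mulVec (R⁻¹.mulVec ((g x)ᵀ.mulVec (∇φ₀ x)))) = −m̄(x). Then φ_p := φ₀ + h satisfies, for all x: ∇φ_p(x) ⬝ᵥ f(x) − (1/4)·((g x)ᵀ.mulVec (∇φ_p x)) ⬝ᵥ (R⁻¹.mulVec ((g x)ᵀ.mulVec (∇φ_p x))) = −( m₀(x) + m̄(x) + (1/4)·‖R⁻¹.mulVec ((g x)ᵀ.mulVec (∇h x))‖²_R ). That is, φ₀ + h satisfies the steady-state HJB equation with the modified state cost m₀ + m̄ + (1/4)·‖R⁻¹gᵀ∇h‖²_R. -/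

import Mathlib

open Matrix

/-- Euclidean gradient of a scalar function on `Fin n → ℝ`:
the vector of partial derivatives. -/
noncomputable def grad {n : ℕ} (φ : (Fin n → ℝ) → ℝ) (x : Fin n → ℝ) : Fin n → ℝ :=
  fun i => fderiv ℝ φ x (Pi.single i 1)

/-- `R`-weighted squared norm `‖u‖²_R = u ⬝ᵥ R.mulVec u`. -/
def sqR {p : ℕ} (R : Matrix (Fin p) (Fin p) ℝ) (u : Fin p → ℝ) : ℝ :=
  u ⬝ᵥ R.mulVec u

theorem stmt_0 {n p : ℕ}
    (f : (Fin n → ℝ) → (Fin n → ℝ))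
    (g : (Fin n → ℝ) → Matrix (Fin n) (Fin p) ℝ)
    (R : Matrix (Fin p) (Fin p) ℝ)
    (hRsymm : R.IsSymm) (hRpd : R.PosDef)
    (m₀ mbar : (Fin n → ℝ) → ℝ)
    (φ₀ h : (Fin n → ℝ) → ℝ)
    (hφ₀ : Differentiable ℝ φ₀) (hh : Differentiable ℝ h)
    (hHJB : ∀ x, grad φ₀ x ⬝ᵥ f x
        - (1/4) * ((g x)ᵀ.mulVec (grad φ₀ x) ⬝ᵥ R⁻¹.mulVec ((g x)ᵀ.mulVec (grad φ₀ x)))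
        + m₀ x = 0)
    (hPDE : ∀ x, grad h x ⬝ᵥ
        (f x - (1/2 : ℝ) • (g x).mulVec (R⁻¹.mulVec ((g x)ᵀ.mulVec (grad φ₀ x)))) = - mbar x) :
    ∀ x, grad (φ₀ + h) x ⬝ᵥ f x
        - (1/4) * ((g x)ᵀ.mulVec (grad (φ₀ + h) x) ⬝ᵥ
            R⁻¹.mulVec ((g x)ᵀ.mulVec (grad (φ₀ + h) x)))
        = -(m₀ x + mbar x
            + (1/4) * sqR R (R⁻¹.mulVec ((g x)ᵀ.mulVec (grad h x)))) := by
  intro x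
  have hadd : grad (φ₀ + h) x = grad φ₀ x + grad h x := by
    funext i
    simp [grad, fderiv_add (hφ₀ x) (hh x)]
  set a := (g x)ᵀ.mulVec (grad φ₀ x) with ha
  set b := (g x)ᵀ.mulVec (grad h x) with hb
  have hdet : IsUnit R.det := isUnit_iff_ne_zero.2 hRpd.det_pos.ne'
  have hinvsymm : R⁻¹ᵀ = R⁻¹ := by rw [Matrix.transpose_nonsing_inv, hRsymm.eq]
  have hsym : ∀ u v : Fin p → ℝ, u ⬝ᵥ R⁻¹.mulVec v = v ⬝ᵥ R⁻¹.mulVec u := by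
    intro u v
    rw [Matrix.dotProduct_mulVec, ← Matrix.mulVec_transpose, hinvsymm, dotProduct_comm]
  have hRRinv : R.mulVec (R⁻¹.mulVec b) = b := by
    rw [Matrix.mulVec_mulVec, Matrix.mul_nonsing_inv _ hdet, Matrix.one_mulVec]
  have hsq : sqR R (R⁻¹.mulVec b) = b ⬝ᵥ R⁻¹.mulVec b := by
    rw [sqR, hRRinv, dotProduct_comm]
  have hcross : grad h x ⬝ᵥ (g x).mulVec (R⁻¹.mulVec a) = b ⬝ᵥ R⁻¹.mulVec a := by
    rw [Matrix.dotProduct_mulVec, ← Matrix.mulVec_transpose]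
  have hH := hHJB x
  have hP := hPDE x
  rw [dotProduct_sub, dotProduct_smul, hcross, smul_eq_mul] at hP
  rw [hadd]
  have htr : (g x)ᵀ.mulVec (grad φ₀ x + grad h x) = a + b := by
    rw [Matrix.mulVec_add]
  rw [htr, hsq]
  have hexp : (a + b) ⬝ᵥ R⁻¹.mulVec (a + b)
      = a ⬝ᵥ R⁻¹.mulVec a + 2 * (b ⬝ᵥ R⁻¹.mulVec a) + b ⬝ᵥ R⁻¹.mulVec b := by
    rw [Matrix.mulVec_add, dotProduct_add, add_dotProduct, add_dotProduct,
      hsym a b]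
    ring
  rw [add_dotProduct, hexp]
  linarith [hH, hP]
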